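/- The over-Mahonian numbers dominate the Mahonian numbers coefficientwise with a power of 2: for all n ≥ 1 and 0 ≤ k ≤ C(n,2), i(n,k) ≤ i_{B'}(n,k) ≤ 2^k · i(n,k). -/

import Mathlib

open Polynomial Finset

def CRel (P Q : Polynomial ℕ) : Prop :=
  ∀ k, P.coeff k ≤ Q.coeff k ∧ Q.coeff k ≤ 2 ^ k * P.coeff k

lemma rel_one : CRel 1 1 := by
  intro k; constructor
  · exact le_rfl
  · exact Nat.le_mul_of_pos_left _ (by positivity)

lemma rel_mul {P Q P' Q' : Polynomial ℕ} (h : CRel P Q) (h' : CRel P' Q') :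
    CRel (P * P') (Q * Q') := by
  intro k
  rw [Polynomial.coeff_mul, Polynomial.coeff_mul]
  constructor
  · exact Finset.sum_le_sum fun x _ => Nat.mul_le_mul (h x.1).1 (h' x.2).1
  · rw [Finset.mul_sum]
    refine Finset.sum_le_sum fun x hx => ?_
    have hx' : x.1 + x.2 = k := Finset.HasAntidiagonal.mem_antidiagonal.mp hx
    calc Q.coeff x.1 * Q'.coeff x.2
        ≤ (2 ^ x.1 * P.coeff x.1) * (2 ^ x.2 * P'.coeff x.2) :=
          Nat.mul_le_mul (h x.1).2 (h' x.2).2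
      _ = 2 ^ (x.1 + x.2) * (P.coeff x.1 * P'.coeff x.2) := by ring
      _ = 2 ^ k * (P.coeff x.1 * P'.coeff x.2) := by rw [hx']

lemma rel_factor (m : ℕ) :
    CRel (∑ j ∈ Finset.range (m + 1), Polynomial.X ^ j)
        (1 + 2 * ∑ j ∈ Finset.Icc 1 m, Polynomial.X ^ j) := by
  intro k
  have hP : (∑ j ∈ Finset.range (m + 1), (Polynomial.X : Polynomial ℕ) ^ j).coeff k
      = if k ≤ m then 1 else 0 := by
    simp [Polynomial.finset_sum_coeff, Polynomial.coeff_X_pow, eq_comm,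
      Nat.lt_succ_iff]
  have hQ : ((1 : Polynomial ℕ) + 2 * ∑ j ∈ Finset.Icc 1 m, Polynomial.X ^ j).coeff k
      = (if k = 0 then 1 else 0) + 2 * (if 1 ≤ k ∧ k ≤ m then 1 else 0) := by
    simp [Polynomial.finset_sum_coeff, Polynomial.coeff_X_pow, eq_comm,
      Polynomial.coeff_one]
  rw [hP, hQ]
  rcases Nat.eq_zero_or_pos k with rfl | hk
  · simp
  · have h2 : (2:ℕ) ≤ 2 ^ k :=
      le_trans (by norm_num) (Nat.pow_le_pow_right (by norm_num) hk)
    split_ifs <;> omega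

lemma rel_prod {s : Finset ℕ} {f g : ℕ → Polynomial ℕ} (h : ∀ m ∈ s, CRel (f m) (g m)) :
    CRel (∏ m ∈ s, f m) (∏ m ∈ s, g m) := by
  induction s using Finset.induction with
  | empty => simpa using rel_one
  | insert a s hm ih =>
    rw [Finset.prod_insert hm, Finset.prod_insert hm]
    exact rel_mul (h _ (Finset.mem_insert_self _ _))
      (ih fun m hms => h m (Finset.mem_insert_of_mem hms))


/-- Row generating polynomial of the Mahonian numbers:
`∏_{m=1}^{n-1} (1 + z + ⋯ + zᵐ)`. -/
noncomputable def mahonianPoly (n : ℕ) : Polynomial ℕ :=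
  ∏ m ∈ Finset.Icc 1 (n - 1), ∑ j ∈ Finset.range (m + 1), Polynomial.X ^ j

/-- The Mahonian number `i(n,k)`. -/
noncomputable def mahonian (n k : ℕ) : ℕ := (mahonianPoly n).coeff k

/-- Row generating polynomial of the over-Mahonian numbers:
`∏_{m=1}^{n-1} (1 + 2z + ⋯ + 2zᵐ)`. -/
noncomputable def overMahonianPoly (n : ℕ) : Polynomial ℕ :=
  ∏ m ∈ Finset.Icc 1 (n - 1), (1 + 2 * ∑ j ∈ Finset.Icc 1 m, Polynomial.X ^ j)

/-- The over-Mahonian number `i_{B'}(n,k)`. -/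
noncomputable def overMahonian (n k : ℕ) : ℕ := (overMahonianPoly n).coeff k

theorem mahonian_le_overMahonian_le (n k : ℕ) (hn : 1 ≤ n) (hk : k ≤ n.choose 2) :
    mahonian n k ≤ overMahonian n k ∧ overMahonian n k ≤ 2 ^ k * mahonian n k := by
  have h := rel_prod (s := Finset.Icc 1 (n - 1))
    (f := fun m => ∑ j ∈ Finset.range (m + 1), Polynomial.X ^ j)
    (g := fun m => 1 + 2 * ∑ j ∈ Finset.Icc 1 m, Polynomial.X ^ j)
    (fun m _ => rel_factor m) k
  exact h
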